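/- Under the hypotheses of the regularization theorem, the sequence of minimizers {x_j} is uniformly bounded for all sufficiently large j: there exist j₀ and C̃ such that ‖x_j‖₂ ≤ C̃ for all j > j₀. -/

import Mathlib

open Finset Filter

theorem stmt6 (m p : ℕ) (M : (Fin m → ℝ) → (Fin p → ℝ)) (hM : Continuous M)
    (D : Matrix (Fin m) (Fin m) ℝ) (hD : Function.Injective D.mulVec)
    (q : ℝ) (hq0 : 0 < q) (hq2 : q ≤ 2)
    (B : Fin p → ℝ) (Bj : ℕ → Fin p → ℝ) (δ γ : ℕ → ℝ)
    (hδpos : ∀ j, 0 < δ j) (hγpos : ∀ j, 0 < γ j)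
    (hBj : ∀ j, Real.sqrt (∑ i, (B i - Bj j i) ^ 2) ≤ δ j)
    (hδ : Tendsto δ atTop (nhds 0))
    (hγ : Tendsto γ atTop (nhds 0))
    (hδγ : Tendsto (fun j => (δ j) ^ 2 / γ j) atTop (nhds 0))
    (hS : ∃ x : Fin m → ℝ, (∀ i, 0 ≤ x i) ∧ M x = B)
    (x : ℕ → Fin m → ℝ)
    (hxpos : ∀ j i, 0 ≤ x j i)
    (hxmin : ∀ j, ∀ y : Fin m → ℝ, (∀ i, 0 ≤ y i) →
      (1 / 2) * ∑ i, (M (x j) i - Bj j i) ^ 2 +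
          (γ j / q) * ∑ i, |D.mulVec (x j) i| ^ q ≤
        (1 / 2) * ∑ i, (M y i - Bj j i) ^ 2 +
          (γ j / q) * ∑ i, |D.mulVec y i| ^ q) :
    ∃ (j₀ : ℕ) (C : ℝ), ∀ j > j₀, Real.sqrt (∑ i, (x j i) ^ 2) ≤ C := by
  obtain ⟨xd, hxdpos, hxdeq⟩ := hS
  set K : ℝ := ∑ i, |D.mulVec xd i| ^ q with hK
  have hK0 : 0 ≤ K := Finset.sum_nonneg fun i _ =>
    Real.rpow_nonneg (abs_nonneg _) q
  -- eventually δ²/γ ≤ 1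
  have hev : ∀ᶠ j in atTop, (δ j) ^ 2 / γ j < 1 := by
    have : Set.Iio (1:ℝ) ∈ nhds (0:ℝ) := Iio_mem_nhds (by norm_num)
    exact hδγ this
  obtain ⟨j₀, hj₀⟩ := eventually_atTop.1 hev
  -- invertibility of D
  have hU : IsUnit D := Matrix.mulVec_injective_iff_isUnit.1 hD
  have hUdet : IsUnit D.det := (Matrix.isUnit_iff_isUnit_det D).1 hU
  have hInv : ∀ v : Fin m → ℝ, D⁻¹.mulVec (D.mulVec v) = v := by
    intro v
    rw [Matrix.mulVec_mulVec, Matrix.nonsing_inv_mul D hUdet, Matrix.one_mulVec]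
  set c : ℝ := (1 + K) ^ (1 / q) with hc
  have hc0 : 0 ≤ c := Real.rpow_nonneg (by linarith) _
  set b : Fin m → ℝ := fun i => (∑ k, |D⁻¹ i k|) * c with hb
  refine ⟨j₀, Real.sqrt (∑ i, (b i) ^ 2), ?_⟩
  intro j hj
  have hδγj : (δ j) ^ 2 / γ j < 1 := hj₀ j (le_of_lt hj)
  -- key estimate from minimality
  have hmin := hxmin j xd hxdpos
  rw [hxdeq] at hmin
  have hB2 : ∑ i, (B i - Bj j i) ^ 2 ≤ (δ j) ^ 2 := by
    have h1 := hBj j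
    have h2 : 0 ≤ ∑ i, (B i - Bj j i) ^ 2 :=
      Finset.sum_nonneg fun i _ => sq_nonneg _
    nlinarith [Real.sq_sqrt h2, Real.sqrt_nonneg (∑ i, (B i - Bj j i) ^ 2)]
  have hMx0 : 0 ≤ ∑ i, (M (x j) i - Bj j i) ^ 2 :=
    Finset.sum_nonneg fun i _ => sq_nonneg _
  have hγq : 0 < γ j / q := div_pos (hγpos j) hq0
  have hSle : (γ j / q) * ∑ i, |D.mulVec (x j) i| ^ q ≤ (1/2) * (δ j)^2 + (γ j / q) * K := by
    nlinarith
  have hSle2 : ∑ i, |D.mulVec (x j) i| ^ q ≤ (q / 2) * ((δ j)^2 / γ j) + K := by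
    rw [← le_div_iff₀' hγq] at hSle
    calc ∑ i, |D.mulVec (x j) i| ^ q ≤ ((1/2) * (δ j)^2 + (γ j / q) * K) / (γ j / q) := hSle
      _ = (q / 2) * ((δ j)^2 / γ j) + K := by
          have hqne : q ≠ 0 := hq0.ne'
          have hγne : γ j ≠ 0 := (hγpos j).ne'
          field_simp
  have hSle3 : ∑ i, |D.mulVec (x j) i| ^ q ≤ 1 + K := by
    have hq' : q / 2 ≤ 1 := by linarith
    have h0 : 0 ≤ (δ j)^2 / γ j := div_nonneg (sq_nonneg _) (hγpos j).le
    nlinarith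
  -- componentwise bound on D.mulVec (x j)
  have habs : ∀ i, |D.mulVec (x j) i| ≤ c := by
    intro i
    have h1 : |D.mulVec (x j) i| ^ q ≤ 1 + K := by
      refine le_trans ?_ hSle3
      exact Finset.single_le_sum (fun k _ => Real.rpow_nonneg (abs_nonneg _) q)
        (Finset.mem_univ i)
    have h2 : (|D.mulVec (x j) i| ^ q) ^ (1/q) ≤ (1 + K) ^ (1/q) :=
      Real.rpow_le_rpow (Real.rpow_nonneg (abs_nonneg _) q) h1
        (le_of_lt (by positivity))
    rwa [← Real.rpow_mul (abs_nonneg _), mul_one_div, div_self hq0.ne',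
      Real.rpow_one] at h2
  -- bound components of x j via D⁻¹
  have hxb : ∀ i, |x j i| ≤ b i := by
    intro i
    have hxi : x j i = ∑ k, D⁻¹ i k * D.mulVec (x j) k := by
      conv_lhs => rw [← hInv (x j)]
      rfl
    rw [hxi]
    calc |∑ k, D⁻¹ i k * D.mulVec (x j) k| ≤ ∑ k, |D⁻¹ i k * D.mulVec (x j) k| :=
          Finset.abs_sum_le_sum_abs _ _
      _ ≤ ∑ k, |D⁻¹ i k| * c := by
          refine Finset.sum_le_sum fun k _ => ?_
          rw [abs_mul]
          exact mul_le_mul_of_nonneg_left (habs k) (abs_nonneg _)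
      _ = b i := by simp [hb, Finset.sum_mul]
  refine Real.sqrt_le_sqrt (Finset.sum_le_sum fun i _ => ?_)
  have := hxb i
  nlinarith [abs_nonneg (x j i), hxb i, sq_abs (x j i),
    mul_le_mul (hxb i) (hxb i) (abs_nonneg _) (le_trans (abs_nonneg _) (hxb i))]
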